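/- Let G be an induced-minor-minimal non-2-cograph. Then both G and its complement are 2-connected. -/
import Mathlib


/-- A graph is 2-connected if it has at least 3 vertices, is connected,
and remains connected after deleting any single vertex. -/
def TwoConnected {V : Type} [Fintype V] (G : SimpleGraph V) : Prop :=
  3 ≤ Fintype.card V ∧ G.Connected ∧
    ∀ v : V, (G.induce ({v}ᶜ : Set V)).Connected

/-- A graph is a 2-cograph if it has no induced subgraph `H` such that
both `H` and its complement are 2-connected. -/
def IsTwoCograph {V : Type} [Fintype V] (G : SimpleGraph V) : Prop :=
  ∀ S : Finset V, ¬ (TwoConnected (G.induce (S : Set V)) ∧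
      TwoConnected ((G.induce (S : Set V))ᶜ))

/-- `H` is an induced minor of `G`: witnessed by pairwise disjoint nonempty
connected branch sets, with adjacency in `H` iff there is an edge between
the corresponding branch sets. -/
def IsInducedMinor {V W : Type} (G : SimpleGraph V) (H : SimpleGraph W) : Prop :=
  ∃ B : W → Set V,
    (∀ w, (B w).Nonempty) ∧
    (∀ w, (G.induce (B w)).Connected) ∧
    (Pairwise fun w w' => Disjoint (B w) (B w')) ∧
    ∀ w w', w ≠ w' → (H.Adj w w' ↔ ∃ a ∈ B w, ∃ b ∈ B w', G.Adj a b)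

/-- `G` is an induced-minor-minimal non-2-cograph: `G` is not a 2-cograph but
every proper induced minor of `G` (one with fewer vertices) is a 2-cograph. -/
def IsIMMNon2Cograph {V : Type} [Fintype V] (G : SimpleGraph V) : Prop :=
  ¬ IsTwoCograph G ∧
    ∀ (W : Type) [Fintype W], ∀ H : SimpleGraph W,
      IsInducedMinor G H → Fintype.card W < Fintype.card V → IsTwoCograph H

open SimpleGraph

/-- Restrict an isomorphism to induced subgraphs on vertex-deleted sets. -/
def isoInduceCompl {V W : Type} {G : SimpleGraph V} {H : SimpleGraph W}
    (e : G ≃g H) (v : W) :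
    (G.induce ({e.symm v}ᶜ : Set V)) ≃g (H.induce ({v}ᶜ : Set W)) where
  toEquiv := e.toEquiv.subtypeEquiv (fun a => by
    simp only [Set.mem_compl_iff, Set.mem_singleton_iff]
    constructor
    · intro h h'; exact h (by simpa using congrArg e.symm h')
    · intro h h'; exact h (by rw [h']; simp))
  map_rel_iff' := by
    intro a b
    simp only [SimpleGraph.comap_adj, Function.Embedding.coe_subtype,
      Equiv.subtypeEquiv_apply]
    exact e.map_rel_iff

lemma twoConnected_of_iso {V W : Type} [Fintype V] [Fintype W]
    {G : SimpleGraph V} {H : SimpleGraph W} (e : G ≃g H)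
    (hG : TwoConnected G) : TwoConnected H := by
  obtain ⟨h3, hc, hd⟩ := hG
  refine ⟨?_, (e.connected_iff).mp hc, fun v => ?_⟩
  · rwa [← Fintype.card_congr e.toEquiv]
  · exact ((isoInduceCompl e v).connected_iff).mp (hd (e.symm v))

lemma compl_induce {V : Type} (G : SimpleGraph V) (s : Set V) :
    (G.induce s)ᶜ = Gᶜ.induce s := by
  ext a b
  simp only [compl_adj, comap_adj, Function.Embedding.coe_subtype]
  constructor
  · rintro ⟨h1, h2⟩; exact ⟨fun h => h1 (Subtype.ext h), h2⟩
  · rintro ⟨h1, h2⟩; exact ⟨fun h => h1 (congrArg Subtype.val h), h2⟩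

/-- Induce on a set containing all vertices gives an isomorphic graph. -/
def induceTopIso {W : Type} (H : SimpleGraph W) (s : Set W) (hs : ∀ x, x ∈ s) :
    H.induce s ≃g H where
  toEquiv := Equiv.subtypeUnivEquiv hs
  map_rel_iff' := Iff.rfl

lemma not_isTwoCograph_self {W : Type} [Fintype W] {H : SimpleGraph W}
    (h1 : TwoConnected H) (h2 : TwoConnected Hᶜ) : ¬ IsTwoCograph H := by
  intro hc
  refine hc Finset.univ ⟨?_, ?_⟩
  · exact twoConnected_of_iso (induceTopIso H _ (by simp)).symm h1
  · rw [compl_induce]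
    exact twoConnected_of_iso (induceTopIso Hᶜ _ (by simp)).symm h2

lemma singleton_induce_connected {V : Type} (G : SimpleGraph V) (a : V) :
    (G.induce ({a} : Set V)).Connected := by
  rw [SimpleGraph.connected_iff]
  refine ⟨fun x y => ?_, ⟨⟨a, rfl⟩⟩⟩
  have hxy : x = y := Subtype.ext (x.2.trans y.2.symm)
  rw [hxy]

lemma induce_isInducedMinor {V : Type} (G : SimpleGraph V) (S : Set V) :
    IsInducedMinor G (G.induce S) := by
  refine ⟨fun w => {(w : V)}, fun w => ⟨w, rfl⟩,
    fun w => singleton_induce_connected G w, ?_, ?_⟩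
  · intro w w' hne
    simp only [Set.disjoint_singleton_left, Set.mem_singleton_iff]
    exact fun h => hne (Subtype.ext h)
  · intro w w' _
    simp [comap_adj]

theorem imm_non2cograph_twoConnected {V : Type} [Fintype V] (G : SimpleGraph V)
    (hG : IsIMMNon2Cograph G) : TwoConnected G ∧ TwoConnected Gᶜ := by
  obtain ⟨hnot, hmin⟩ := hG
  rw [IsTwoCograph] at hnot
  push_neg at hnot
  obtain ⟨S, h1, h2⟩ := hnot
  have hcard : Fintype.card ((S : Set V) : Type) = Fintype.card V := by
    by_contra h
    have hlt : Fintype.card ((S : Set V) : Type) < Fintype.card V :=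
      lt_of_le_of_ne (Fintype.card_le_of_injective _ Subtype.val_injective) h
    exact not_isTwoCograph_self h1 h2
      (hmin _ (G.induce (S : Set V)) (induce_isInducedMinor G _) hlt)
  have hS : S = Finset.univ := by
    apply Finset.eq_univ_of_card
    simpa using hcard
  subst hS
  refine ⟨twoConnected_of_iso (induceTopIso G _ (by simp)) h1, ?_⟩
  rw [compl_induce] at h2
  exact twoConnected_of_iso (induceTopIso Gᶜ _ (by simp)) h2
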